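/- Let f : [0,1] → [0,∞) be a monotone nondecreasing differentiable function with f(r) > 0 for r > 0, and suppose that for all r ∈ (0,1], f(r) ≤ I · (f'(r))^{n/(n-1)} for some constant I > 0 and integer n ≥ 2. Then there exists a constant v > 0 depending only on n and I such that f(r) ≥ v · r^n for all r ∈ (0,1]. -/

import Mathlib

open Set Filter Topology

/-- If `f` is monotone on `Icc 0 1` and differentiable at an interior point, the
derivative is nonnegative there. -/
lemma aux_deriv_nonneg (f : ℝ → ℝ) (hmono : MonotoneOn f (Set.Icc 0 1))
    {x : ℝ} (hx : x ∈ Set.Ioo (0:ℝ) 1) (hd : DifferentiableAt ℝ f x) :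
    0 ≤ deriv f x := by
  have hda : HasDerivAt f (deriv f x) x := hd.hasDerivAt
  have htend : Tendsto (slope f x) (𝓝[>] x) (𝓝 (deriv f x)) :=
    (hasDerivAt_iff_tendsto_slope.1 hda).mono_left
      (nhdsWithin_mono _ fun y hy => ne_of_gt hy)
  refine le_of_tendsto_of_tendsto tendsto_const_nhds htend ?_
  filter_upwards [Ioo_mem_nhdsGT_of_mem ⟨le_refl x, hx.2⟩] with y hy
  have hxy : x < y := hy.1
  have hfle : f x ≤ f y := hmono ⟨hx.1.le, hx.2.le⟩ ⟨(hx.1.trans hxy).le, hy.2.le⟩ hxy.le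
  have : 0 ≤ (f y - f x) / (y - x) := div_nonneg (by linarith) (by linarith)
  simpa [slope_def_field, div_eq_mul_inv] using this

/-- The isoperimetric differential inequality `f r ≤ I (f' r)^{n/(n-1)}` integrates
into a lower bound `f r ≥ v r^n` with `v = v(n, I) > 0`. -/
theorem stmt3 (n : ℕ) (hn : 2 ≤ n) (I : ℝ) (hI : 0 < I) :
    ∃ v > 0, ∀ f : ℝ → ℝ,
      (∀ x ∈ Set.Icc (0:ℝ) 1, DifferentiableAt ℝ f x) →
      MonotoneOn f (Set.Icc 0 1) →
      (∀ x ∈ Set.Icc (0:ℝ) 1, 0 ≤ f x) →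
      (∀ r ∈ Set.Ioc (0:ℝ) 1, 0 < f r) →
      (∀ r ∈ Set.Ioc (0:ℝ) 1, f r ≤ I * (deriv f r) ^ ((n : ℝ) / (n - 1))) →
      ∀ r ∈ Set.Ioc (0:ℝ) 1, v * r ^ n ≤ f r := by
  have hn0 : (0:ℝ) < (n:ℝ) := by positivity
  have hn1 : (1:ℝ) ≤ (n:ℝ) - 1 := by
    have : (2:ℝ) ≤ (n:ℝ) := by exact_mod_cast hn
    linarith
  have hn1pos : (0:ℝ) < (n:ℝ) - 1 := by linarith
  set p : ℝ := 1 / (n:ℝ) with hp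
  set q : ℝ := ((n:ℝ) - 1) / (n:ℝ) with hq
  have hppos : 0 < p := by positivity
  have hqpos : 0 < q := by positivity
  have hpq : p - 1 + q = 0 := by rw [hp, hq]; field_simp; ring
  have hiq : (n:ℝ) / ((n:ℝ) - 1) * q = 1 := by
    rw [hq, div_mul_div_comm, div_eq_one_iff_eq (by positivity)]; ring
  set c : ℝ := p * I ^ (-q) with hc
  have hcpos : 0 < c := by
    have := Real.rpow_pos_of_pos hI (-q); positivity
  refine ⟨c ^ n, by positivity, ?_⟩
  intro f hdiff hmono hnonneg hpos hineq r hr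
  set g : ℝ → ℝ := fun y => f y ^ p with hg
  -- derivative lower bound for g at interior points
  have key : ∀ x ∈ Set.Ioo (0:ℝ) 1,
      HasDerivAt g (p * f x ^ (p - 1) * deriv f x) x ∧
      c ≤ p * f x ^ (p - 1) * deriv f x := by
    intro x hx
    have hxIcc : x ∈ Set.Icc (0:ℝ) 1 := ⟨hx.1.le, hx.2.le⟩
    have hxIoc : x ∈ Set.Ioc (0:ℝ) 1 := ⟨hx.1, hx.2.le⟩
    have hfx : 0 < f x := hpos x hxIoc
    have hdx : DifferentiableAt ℝ f x := hdiff x hxIcc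
    have hderiv_nn : 0 ≤ deriv f x := aux_deriv_nonneg f hmono hx hdx
    constructor
    · have h1 : HasDerivAt (fun y : ℝ => y ^ p) (p * f x ^ (p - 1)) (f x) := by
        simpa [mul_comm] using Real.hasDerivAt_rpow_const (x := f x) (p := p)
          (Or.inl hfx.ne')
      exact h1.comp x hdx.hasDerivAt
    · -- from the isoperimetric inequality: deriv f x ≥ (f x / I)^q
      have hI1 : f x / I ≤ (deriv f x) ^ ((n:ℝ) / ((n:ℝ) - 1)) := by
        rw [div_le_iff₀ hI]
        calc f x ≤ I * (deriv f x) ^ ((n:ℝ) / ((n:ℝ) - 1)) := hineq x hxIoc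
        _ = _ := by ring
      have h2 : (f x / I) ^ q ≤ ((deriv f x) ^ ((n:ℝ) / ((n:ℝ) - 1))) ^ q :=
        Real.rpow_le_rpow (by positivity) hI1 hqpos.le
      have h3 : ((deriv f x) ^ ((n:ℝ) / ((n:ℝ) - 1))) ^ q = deriv f x := by
        rw [← Real.rpow_mul hderiv_nn, hiq, Real.rpow_one]
      have h4 : (f x / I) ^ q ≤ deriv f x := h3 ▸ h2
      have h5 : (f x / I) ^ q = f x ^ q * I ^ (-q) := by
        rw [div_eq_mul_inv, Real.mul_rpow hfx.le (by positivity),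
          ← Real.rpow_neg_one I, ← Real.rpow_mul hI.le]
        ring_nf
      calc c = p * (f x ^ (p - 1) * f x ^ q) * I ^ (-q) := by
            rw [← Real.rpow_add hfx, hpq, Real.rpow_zero, mul_one]
        _ = p * f x ^ (p - 1) * (f x ^ q * I ^ (-q)) := by ring
        _ = p * f x ^ (p - 1) * (f x / I) ^ q := by rw [h5]
        _ ≤ p * f x ^ (p - 1) * deriv f x := by
            have : 0 ≤ p * f x ^ (p - 1) := by positivity
            exact mul_le_mul_of_nonneg_left h4 this
  -- lower bound g r ≥ c * r
  have hgr : c * r ≤ g r := by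
    refine le_of_forall_pos_le_add ?_
    intro δ hδ
    set ε : ℝ := min (δ / c) (r / 2) with hε
    have hεpos : 0 < ε := lt_min (div_pos hδ hcpos) (half_pos hr.1)
    have hεr : ε < r := (min_le_right _ _).trans_lt (by linarith [hr.1])
    -- monotonicity of h := g - c * id on [ε, r]
    have hcont : ContinuousOn g (Set.Icc ε r) := by
      intro x hx
      have hxIcc : x ∈ Set.Icc (0:ℝ) 1 := ⟨hεpos.le.trans hx.1, hx.2.trans hr.2⟩
      have hfx : 0 < f x := hpos x ⟨hεpos.trans_le hx.1, hxIcc.2⟩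
      exact ((hdiff x hxIcc).continuousAt.rpow_const (Or.inl hfx.ne')).continuousWithinAt
    have hmonoh : MonotoneOn (fun y => g y - c * y) (Set.Icc ε r) := by
      apply monotoneOn_of_deriv_nonneg (convex_Icc ε r)
      · exact hcont.sub (continuousOn_const.mul continuousOn_id)
      · intro x hx
        rw [interior_Icc] at hx
        have hx01 : x ∈ Set.Ioo (0:ℝ) 1 := ⟨hεpos.trans hx.1, hx.2.trans_le hr.2⟩
        obtain ⟨hda, _⟩ := key x hx01
        exact ((hda.sub ((hasDerivAt_id x).const_mul c)).differentiableAt).differentiableWithinAt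
      · intro x hx
        rw [interior_Icc] at hx
        have hx01 : x ∈ Set.Ioo (0:ℝ) 1 := ⟨hεpos.trans hx.1, hx.2.trans_le hr.2⟩
        obtain ⟨hda, hge⟩ := key x hx01
        have : HasDerivAt (fun y => g y - c * y) (p * f x ^ (p - 1) * deriv f x - c) x := by
          have h := hda.sub ((hasDerivAt_id x).const_mul c); rw [mul_one] at h; exact h
        rw [this.deriv]
        linarith
    have h1 : g ε - c * ε ≤ g r - c * r :=
      hmonoh ⟨le_refl ε, hεr.le⟩ ⟨hεr.le, le_refl r⟩ hεr.le
    have hgε : 0 ≤ g ε := Real.rpow_nonneg (hnonneg ε ⟨hεpos.le, hεr.le.trans hr.2⟩) p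
    have hcε : c * ε ≤ δ := by
      calc c * ε ≤ c * (δ / c) := by
            exact mul_le_mul_of_nonneg_left (min_le_left _ _) hcpos.le
        _ = δ := by field_simp
    linarith
  -- conclude
  have hgrn : (c * r) ^ n ≤ (g r) ^ n := by
    exact pow_le_pow_left₀ (mul_pos hcpos hr.1).le hgr n
  have hgn : (g r) ^ n = f r := by
    have hfr : 0 ≤ f r := (hpos r hr).le
    rw [hg, ← Real.rpow_natCast (f r ^ p) n, ← Real.rpow_mul hfr]
    have hpn : p * (n:ℝ) = 1 := by
      rw [hp]; exact one_div_mul_cancel hn0.ne'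
    rw [hpn, Real.rpow_one]
  calc c ^ n * r ^ n = (c * r) ^ n := (mul_pow c r n).symm
    _ ≤ (g r) ^ n := hgrn
    _ = f r := hgn
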